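/- If (f, Inv) is a composition-invariant pair for T and the k-safety property (pre, post), then T satisfies (pre, post). -/
import Mathlib

/-- `a` reaches `b` in exactly `n` steps of `R`. -/
def stepsRel {S : Type*} (R : S → S → Prop) : ℕ → S → S → Prop
  | 0 => Eq
  | n+1 => fun a b => ∃ c, R a c ∧ stepsRel R n c b

lemma reflTransGen_steps {S : Type*} {R : S → S → Prop} {a b : S}
    (h : Relation.ReflTransGen R a b) : ∃ n, stepsRel R n a b := by
  induction h using Relation.ReflTransGen.head_induction_on with
  | refl => exact ⟨0, rfl⟩
  | head hR _ ih =>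
    obtain ⟨n, hn⟩ := ih
    exact ⟨n+1, _, hR, hn⟩

lemma stepsRel_pos {S : Type*} {R : S → S → Prop} {n : ℕ} {a b : S}
    (hn : n ≠ 0) (h : stepsRel R n a b) : ∃ c, R a c ∧ stepsRel R (n-1) c b := by
  cases n with
  | zero => exact absurd rfl hn
  | succ m => exact h

lemma stepsRel_terminal {S : Type*} {R : S → S → Prop} {F : Set S}
    (hterm : ∀ s ∈ F, R s s ∧ ∀ t, R s t → t = s) {n : ℕ} {a b : S}
    (ha : a ∈ F) (h : stepsRel R n a b) : b = a := by
  induction n generalizing a with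
  | zero => exact h.symm
  | succ m ih =>
    obtain ⟨c, hc, hcb⟩ := h
    have : c = a := (hterm a ha).2 c hc
    subst this
    exact ih ha hcb

/-- If `(f, Inv)` (with `f` given by conditions `C_M`) is a
composition-invariant pair for `T` and the `k`-safety property `(pre, post)`,
then `T` satisfies `(pre, post)`: every `k`-tuple of terminating executions starting
in `pre` ends in `post`. -/
theorem composition_invariant_pair_sound {S : Type*} {k : ℕ}
    (R : S → S → Prop) (F : Set S) (pre post : Set (Fin k → S))
    (C : Finset (Fin k) → Set (Fin k → S)) (Inv : Set (Fin k → S))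
    (hterm : ∀ s ∈ F, R s s ∧ ∀ t, R s t → t = s)
    (hinit : pre ⊆ Inv)
    (hcons : ∀ M : Finset (Fin k), M.Nonempty → ∀ x x' : Fin k → S,
      x ∈ Inv → x ∈ C M → (∀ i ∈ M, R (x i) (x' i)) → (∀ i ∉ M, x' i = x i) →
      x' ∈ Inv)
    (hsafe : ∀ x ∈ Inv, (∀ i, x i ∈ F) → x ∈ post)
    (hcov : ∀ x ∈ Inv, ∃ M : Finset (Fin k), M.Nonempty ∧ x ∈ C M)
    (hfair : ∀ (M : Finset (Fin k)) (x : Fin k → S), x ∈ C M →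
      (∃ i, x i ∉ F) → ∃ j ∈ M, x j ∉ F) :
    ∀ s t : Fin k → S, s ∈ pre →
      (∀ i, Relation.ReflTransGen R (s i) (t i) ∧ t i ∈ F) → t ∈ post := by
  intro s t hs ht
  have key : ∀ N : ℕ, ∀ n : Fin k → ℕ, (∑ i, n i) = N → ∀ x : Fin k → S,
      x ∈ Inv → (∀ i, stepsRel R (n i) (x i) (t i)) → t ∈ post := by
    intro N
    induction N using Nat.strong_induction_on with
    | _ N ih =>
      intro n hN x hx hsteps
      by_cases hF : ∀ i, x i ∈ F
      · have hxt : t = x := by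
          funext i
          exact stepsRel_terminal hterm (hF i) (hsteps i)
        rw [hxt]
        exact hsafe x hx hF
      · push_neg at hF
        obtain ⟨M, hMne, hxC⟩ := hcov x hx
        obtain ⟨j, hjM, hjF⟩ := hfair M x hxC hF
        have hnj : n j ≠ 0 := by
          intro h0
          have := hsteps j
          rw [h0] at this
          exact hjF (this ▸ (ht j).2)
        -- build the successor state
        have hch : ∀ i, i ∈ M ∧ n i ≠ 0 → ∃ c, R (x i) c ∧ stepsRel R (n i - 1) c (t i) :=
          fun i hi => stepsRel_pos hi.2 (hsteps i)
        classical
        set x' : Fin k → S := fun i =>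
          if h : i ∈ M ∧ n i ≠ 0 then Classical.choose (hch i h) else x i with hx'def
        set n' : Fin k → ℕ := fun i => if i ∈ M ∧ n i ≠ 0 then n i - 1 else n i with hn'def
        have hx'pos : ∀ i (h : i ∈ M ∧ n i ≠ 0), x' i = Classical.choose (hch i h) := by
          intro i h; simp only [hx'def]; exact dif_pos h
        have hx'neg : ∀ i, ¬(i ∈ M ∧ n i ≠ 0) → x' i = x i := by
          intro i h; simp only [hx'def]; exact dif_neg h
        have hstep : ∀ i ∈ M, R (x i) (x' i) := by
          intro i hiM
          by_cases hni : n i ≠ 0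
          · rw [hx'pos i ⟨hiM, hni⟩]
            exact (Classical.choose_spec (hch i ⟨hiM, hni⟩)).1
          · rw [hx'neg i (by tauto)]
            push_neg at hni
            have hxit : x i = t i := by have := hsteps i; rw [hni] at this; exact this
            have hxF : x i ∈ F := hxit ▸ (ht i).2
            exact (hterm _ hxF).1
        have hfreeze : ∀ i ∉ M, x' i = x i := fun i hiM => hx'neg i (by tauto)
        have hx'Inv : x' ∈ Inv := hcons M hMne x x' hx hxC hstep hfreeze
        have hsteps' : ∀ i, stepsRel R (n' i) (x' i) (t i) := by
          intro i
          by_cases h : i ∈ M ∧ n i ≠ 0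
          · rw [hx'pos i h, show n' i = n i - 1 from if_pos h]
            exact (Classical.choose_spec (hch i h)).2
          · rw [hx'neg i h, show n' i = n i from if_neg h]
            exact hsteps i
        have hlt : (∑ i, n' i) < N := by
          rw [← hN]
          refine Finset.sum_lt_sum (fun i _ => ?_) ⟨j, Finset.mem_univ j, ?_⟩
          · simp only [hn'def]; split <;> omega
          · have : n' j = n j - 1 := if_pos ⟨hjM, hnj⟩
            omega
        exact ih _ hlt n' rfl x' hx'Inv hsteps'
  obtain ⟨n, hn⟩ : ∃ n : Fin k → ℕ, ∀ i, stepsRel R (n i) (s i) (t i) := by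
    choose n hn using fun i => reflTransGen_steps (ht i).1
    exact ⟨n, hn⟩
  exact key _ n rfl s (hinit hs) hn
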